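/- Let F : ℝ^d → ℝ be convex with minimum F_* attained, and suppose the proximal gradient iteration x_{τ+1} = prox_{g/L}(x_τ − ∇f(x_τ)/L) (F = f + g, f convex L-smooth, g proper convex lsc) is run. Then for t = 2j, min_{1≤τ≤t} ‖G(x_τ)‖² ≤ (2L/j)(F(x_j) − F_*), where G(x) = L(x − prox_{g/L}(x − ∇f(x)/L)). -/

import Mathlib

-- Descent lemma
theorem descent_lemma {d : ℕ} (L : ℝ) (hL : 0 < L)
    (f : EuclideanSpace ℝ (Fin d) → ℝ)
    (f' : EuclideanSpace ℝ (Fin d) → EuclideanSpace ℝ (Fin d))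
    (hgrad : ∀ x, HasGradientAt f (f' x) x)
    (hlip : ∀ x y, ‖f' x - f' y‖ ≤ L * ‖x - y‖)
    (x y : EuclideanSpace ℝ (Fin d)) :
    f y ≤ f x + (inner ℝ (f' x) (y - x) : ℝ) + L / 2 * ‖y - x‖ ^ 2 := by
  set v := y - x with hv
  set φ : ℝ → ℝ := fun t => f (x + t • v) - t * (inner ℝ (f' x) v : ℝ) - L / 2 * t ^ 2 * ‖v‖ ^ 2 with hφ
  have hderiv : ∀ t : ℝ, HasDerivAt φ
      ((inner ℝ (f' (x + t • v)) v : ℝ) - (inner ℝ (f' x) v : ℝ) - L * t * ‖v‖ ^ 2) t := by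
    intro t
    have hc : HasDerivAt (fun t : ℝ => x + t • v) v t := by
      simpa using ((hasDerivAt_id t).smul_const v).const_add x
    have h1 : HasDerivAt (fun t : ℝ => f (x + t • v)) (inner ℝ (f' (x + t • v)) v : ℝ) t := by
      have := ((hgrad (x + t • v)).hasFDerivAt).comp_hasDerivAt t hc
      simp only [InnerProductSpace.toDual_apply_apply] at this
      exact this
    have h2 : HasDerivAt (fun t : ℝ => t * (inner ℝ (f' x) v : ℝ)) (inner ℝ (f' x) v : ℝ) t :=
      hasDerivAt_mul_const _
    have h3 : HasDerivAt (fun t : ℝ => L / 2 * t ^ 2 * ‖v‖ ^ 2) (L * t * ‖v‖ ^ 2) t := by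
      have := ((hasDerivAt_pow 2 t).const_mul (L / 2)).mul_const (‖v‖ ^ 2)
      refine this.congr_deriv ?_
      simp only [Nat.cast_ofNat, show (2:ℕ) - 1 = 1 from rfl, pow_one]
      ring
    exact (h1.sub h2).sub h3
  have hmono : AntitoneOn φ (Set.Icc 0 1) := by
    apply antitoneOn_of_deriv_nonpos (convex_Icc 0 1)
    · exact fun t _ => ((hderiv t).differentiableAt).continuousAt.continuousWithinAt
    · exact fun t _ => (hderiv t).differentiableAt.differentiableWithinAt
    · intro t ht
      rw [interior_Icc] at ht
      rw [(hderiv t).deriv]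
      have hcs : (inner ℝ (f' (x + t • v) - f' x) v : ℝ) ≤ ‖f' (x + t • v) - f' x‖ * ‖v‖ :=
        real_inner_le_norm _ _
      have hl : ‖f' (x + t • v) - f' x‖ ≤ L * (t * ‖v‖) := by
        have := hlip (x + t • v) x
        simpa [norm_smul, abs_of_pos ht.1, mul_assoc] using this
      have hv0 : (0:ℝ) ≤ ‖v‖ := norm_nonneg _
      nlinarith [inner_sub_left (𝕜 := ℝ) (f' (x + t • v)) (f' x) v]
  have := hmono (Set.mem_Icc.mpr ⟨le_refl 0, zero_le_one⟩) (Set.mem_Icc.mpr ⟨zero_le_one, le_refl 1⟩) zero_le_one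
  simp only [hφ, one_smul, zero_smul, add_zero, one_pow, mul_one, one_mul, zero_pow, mul_zero, sub_zero] at this
  have hxy : x + v = y := by simp [hv]
  rw [hxy] at this
  linarith

theorem aux_limit (c B : ℝ) (hB : 0 ≤ B)
    (h : ∀ lam : ℝ, 0 < lam → lam ≤ 1 → 0 ≤ c + lam * B) : 0 ≤ c := by
  by_contra hc
  push_neg at hc
  rcases eq_or_lt_of_le hB with hB0 | hB0
  · have := h 1 one_pos le_rfl
    nlinarith
  · have hlpos : 0 < min 1 (-c / (2 * B)) :=
      lt_min one_pos (div_pos (by linarith) (by linarith))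
    have := h _ hlpos (min_le_left _ _)
    have hle : min 1 (-c / (2 * B)) ≤ -c / (2 * B) := min_le_right _ _
    have h2 : min 1 (-c / (2 * B)) * B ≤ -c / 2 := by
      have h3 := mul_le_mul_of_nonneg_right hle (le_of_lt hB0)
      have h4 : -c / (2 * B) * B = -c / 2 := by field_simp
      linarith
    linarith

theorem suff_decrease {d : ℕ} (L : ℝ) (hL : 0 < L)
    (f g : EuclideanSpace ℝ (Fin d) → ℝ)
    (f' : EuclideanSpace ℝ (Fin d) → EuclideanSpace ℝ (Fin d))
    (hgrad : ∀ x, HasGradientAt f (f' x) x)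
    (hlip : ∀ x y, ‖f' x - f' y‖ ≤ L * ‖x - y‖)
    (hconvg : ConvexOn ℝ Set.univ g)
    (T : EuclideanSpace ℝ (Fin d) → EuclideanSpace ℝ (Fin d))
    (hT : ∀ x z, 1 / 2 * ‖T x - (x - (1 / L) • f' x)‖ ^ 2 + (1 / L) * g (T x)
        ≤ 1 / 2 * ‖z - (x - (1 / L) • f' x)‖ ^ 2 + (1 / L) * g z)
    (y : EuclideanSpace ℝ (Fin d)) :
    f (T y) + g (T y) + L / 2 * ‖y - T y‖ ^ 2 ≤ f y + g y := by
  set b := y - T y with hb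
  set a := T y - (y - (1 / L) • f' y) with ha
  -- λ-family inequality
  have hlam : ∀ lam : ℝ, 0 < lam → lam ≤ 1 →
      0 ≤ (inner ℝ a b : ℝ) + lam / 2 * ‖b‖ ^ 2 + (1 / L) * (g y - g (T y)) := by
    intro lam h0 h1
    have hTz := hT y (T y + lam • b)
    have hconv : g (T y + lam • b) ≤ (1 - lam) * g (T y) + lam * g y := by
      have heq : T y + lam • b = (1 - lam) • T y + lam • y := by
        rw [hb]; module
      rw [heq]
      exact hconvg.2 (Set.mem_univ (T y)) (Set.mem_univ y) (by linarith) (le_of_lt h0) (by ring)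
    have hexp : ‖T y + lam • b - (y - (1 / L) • f' y)‖ ^ 2
        = ‖a‖ ^ 2 + 2 * (lam * (inner ℝ a b : ℝ)) + lam ^ 2 * ‖b‖ ^ 2 := by
      have : T y + lam • b - (y - (1 / L) • f' y) = a + lam • b := by rw [ha]; module
      rw [this, norm_add_sq_real, real_inner_smul_right, norm_smul, Real.norm_eq_abs, mul_pow, sq_abs]
    rw [hexp] at hTz
    have hL' : (0:ℝ) < 1 / L := by positivity
    have key : 0 ≤ lam * ((inner ℝ a b : ℝ) + lam / 2 * ‖b‖ ^ 2 + (1 / L) * (g y - g (T y))) := by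
      nlinarith
    nlinarith
  -- limit λ → 0
  have hlim : 0 ≤ (inner ℝ a b : ℝ) + (1 / L) * (g y - g (T y)) := by
    apply aux_limit _ (‖b‖ ^ 2 / 2) (by positivity)
    intro lam h0 h1
    have := hlam lam h0 h1
    linarith
  -- rewrite inner a b
  have hab : (inner ℝ a b : ℝ) = (1 / L) * (inner ℝ (f' y) b : ℝ) - ‖b‖ ^ 2 := by
    have : a = (1 / L) • f' y - b := by rw [ha, hb]; module
    rw [this, inner_sub_left, real_inner_smul_left, real_inner_self_eq_norm_sq]
  rw [hab] at hlim
  -- so L‖b‖² ≤ ⟪f'y, b⟫ + g y - g (T y)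
  have hB : L * ‖b‖ ^ 2 ≤ (inner ℝ (f' y) b : ℝ) + (g y - g (T y)) := by
    have := mul_le_mul_of_nonneg_left hlim (le_of_lt hL)
    field_simp at this ⊢
    linarith
  have hdes := descent_lemma L hL f f' hgrad hlip y (T y)
  have hTy : T y - y = -b := by rw [hb]; module
  rw [hTy] at hdes
  simp only [inner_neg_right, norm_neg] at hdes
  linarith
theorem pg_min_prox_grad_norm_bound {d : ℕ} (L : ℝ) (hL : 0 < L)
    (f g : EuclideanSpace ℝ (Fin d) → ℝ)
    (f' : EuclideanSpace ℝ (Fin d) → EuclideanSpace ℝ (Fin d))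
    (hconvf : ConvexOn ℝ Set.univ f)
    (hgrad : ∀ x, HasGradientAt f (f' x) x)
    (hlip : ∀ x y, ‖f' x - f' y‖ ≤ L * ‖x - y‖)
    (hconvg : ConvexOn ℝ Set.univ g) (hlsc : LowerSemicontinuous g)
    (T : EuclideanSpace ℝ (Fin d) → EuclideanSpace ℝ (Fin d))
    (hT : ∀ x z, 1 / 2 * ‖T x - (x - (1 / L) • f' x)‖ ^ 2 + (1 / L) * g (T x)
        ≤ 1 / 2 * ‖z - (x - (1 / L) • f' x)‖ ^ 2 + (1 / L) * g z)
    (Fstar : ℝ) (hFstar : ∀ y, Fstar ≤ f y + g y)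
    (xm : EuclideanSpace ℝ (Fin d)) (hxm : f xm + g xm = Fstar)
    (x : ℕ → EuclideanSpace ℝ (Fin d)) (hiter : ∀ τ, x (τ + 1) = T (x τ))
    (j : ℕ) (hj : 1 ≤ j) :
    (Finset.Icc 1 (2 * j)).inf' (Finset.nonempty_Icc.mpr (by omega))
        (fun τ => ‖L • (x τ - T (x τ))‖ ^ 2)
      ≤ 2 * L / (j : ℝ) * ((f (x j) + g (x j)) - Fstar) := by
  set m := (Finset.Icc 1 (2 * j)).inf' (Finset.nonempty_Icc.mpr (by omega))
      (fun τ => ‖L • (x τ - T (x τ))‖ ^ 2) with hm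
  have key : ∀ τ : ℕ, f (x (τ + 1)) + g (x (τ + 1)) + L / 2 * ‖x τ - x (τ + 1)‖ ^ 2
      ≤ f (x τ) + g (x τ) := by
    intro τ
    rw [hiter τ]
    exact suff_decrease L hL f g f' hgrad hlip hconvg T hT (x τ)
  have hper : ∀ i, i < j → m ≤ 2 * L *
      ((f (x (j + i)) + g (x (j + i))) - (f (x (j + i + 1)) + g (x (j + i + 1)))) := by
    intro i hi
    have hmem : j + i ∈ Finset.Icc 1 (2 * j) := by
      rw [Finset.mem_Icc]; omega
    have h1 : m ≤ ‖L • (x (j + i) - T (x (j + i)))‖ ^ 2 := by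
      rw [hm]; exact Finset.inf'_le _ hmem
    have h2 : ‖L • (x (j + i) - T (x (j + i)))‖ ^ 2
        = L ^ 2 * ‖x (j + i) - T (x (j + i))‖ ^ 2 := by
      rw [norm_smul, Real.norm_eq_abs, abs_of_pos hL, mul_pow]
    have h3 := key (j + i)
    rw [hiter (j + i)] at h3 ⊢
    nlinarith
  have hsum := Finset.sum_le_sum (fun i hi => hper i (Finset.mem_range.mp hi))
  rw [Finset.sum_const, Finset.card_range, nsmul_eq_mul] at hsum
  have htel : ∑ i ∈ Finset.range j,
      (2 * L * ((f (x (j + i)) + g (x (j + i))) - (f (x (j + i + 1)) + g (x (j + i + 1)))))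
      = 2 * L * ((f (x j) + g (x j)) - (f (x (j + j)) + g (x (j + j)))) := by
    rw [← Finset.mul_sum]
    congr 1
    have := Finset.sum_range_sub' (fun i => f (x (j + i)) + g (x (j + i))) j
    simpa [add_assoc] using this
  rw [htel] at hsum
  have hFs : Fstar ≤ f (x (j + j)) + g (x (j + j)) := hFstar _
  have hjpos : (0 : ℝ) < (j : ℝ) := by exact_mod_cast hj
  rw [div_mul_eq_mul_div, le_div_iff₀ hjpos]
  nlinarith
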